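/- Let n ≥ 1, let G be a directed graph on node set V = {1,…,n} with in-neighbor sets D_l ⊆ V satisfying l ∉ D_l for every l (no self-loops), let ρ_{kl} ∈ [0,1] for all k,l, let α ∈ [0,1], let a ∈ {0,1}^n, and let P ∈ [0,1]^n. For each state x^j ∈ {0,1}^n and node l, define η^j_l = (1 + a_l·(α−1)) · ( x^j_l + (1−x^j_l)·(1 − ∏_{r∈D_l}(1 − ρ_{rl}·x^j_r)) ), and define the matrix M by M_{ij} = ∏_{l=1}^n (η^j_l·x^i_l + (1−η^j_l)·(1−x^i_l)). Then for every node r ∈ {1,…,n}: Σ_{x^i∈{0,1}^n} x^i_r · Σ_{x^j∈{0,1}^n} M_{ij}·Π*(P)_{x^j} = (1 + a_r·(α−1)) · ( P_r + (1−P_r)·(1 − ∏_{k∈D_r}(1 − ρ_{kr}·P_k)) ). -/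
import Mathlib


open Finset

/-- Interpret a Boolean state coordinate as a real number (1 = compromised, 0 = secure). -/
def bToR (v : Bool) : ℝ := if v then 1 else 0

/-- The product distribution `Π*(P)` on `{0,1}^n` induced by the marginal vector `P`:
`Π*(P)_x = ∏_l (P_l·x_l + (1−P_l)·(1−x_l))`. -/
noncomputable def piStar {n : ℕ} (P : Fin n → ℝ) (x : Fin n → Bool) : ℝ :=
  ∏ l, (P l * bToR (x l) + (1 - P l) * (1 - bToR (x l)))

lemma sum_prod_bool {n : ℕ} (f : Fin n → Bool → ℝ) :
    ∑ x : Fin n → Bool, ∏ l, f l (x l) = ∏ l, (f l false + f l true) := by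
  classical
  rw [← Fintype.piFinset_univ, ← Finset.prod_univ_sum]
  simp [add_comm]

/-- Theorem 2, `X M Π*(P)` step of the BKF equals the MFA update:
with `η^j_l` the next-step compromise probability of node `l` from state `x^j` under
cleaning `a` (cleaning failure probability `α`, attack success probabilities `ρ_{kl}`,
in-neighbor sets `D_l` with no self-loops) and `M` the induced `2^n`-state transition
matrix, the `r`-th marginal of `M·Π*(P)` is given by the mean-field expression. -/
theorem XMPiStar_eq_MFA {n : ℕ} (hn : 1 ≤ n)
    (D : Fin n → Finset (Fin n)) (hD : ∀ l, l ∉ D l)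
    (ρ : Fin n → Fin n → ℝ) (hρ : ∀ k l, ρ k l ∈ Set.Icc (0 : ℝ) 1)
    (α : ℝ) (hα : α ∈ Set.Icc (0 : ℝ) 1) (a : Fin n → Bool)
    (P : Fin n → ℝ) (hP : ∀ l, P l ∈ Set.Icc (0 : ℝ) 1)
    (η : (Fin n → Bool) → Fin n → ℝ)
    (hη : ∀ (xj : Fin n → Bool) (l : Fin n),
      η xj l = (1 + bToR (a l) * (α - 1)) *
        (bToR (xj l) +
          (1 - bToR (xj l)) * (1 - ∏ r ∈ D l, (1 - ρ r l * bToR (xj r)))))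
    (M : (Fin n → Bool) → (Fin n → Bool) → ℝ)
    (hM : ∀ xi xj : Fin n → Bool,
      M xi xj = ∏ l, (η xj l * bToR (xi l) + (1 - η xj l) * (1 - bToR (xi l))))
    (r : Fin n) :
    ∑ xi : Fin n → Bool, bToR (xi r) * ∑ xj : Fin n → Bool, M xi xj * piStar P xj =
      (1 + bToR (a r) * (α - 1)) *
        (P r + (1 - P r) * (1 - ∏ k ∈ D r, (1 - ρ k r * P k))) := by
  classical
  set c : ℝ := 1 + bToR (a r) * (α - 1) with hc
  -- Step 1: for each xj, ∑_xi x_r * M xi xj = η xj r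
  have step1 : ∀ xj : Fin n → Bool,
      ∑ xi : Fin n → Bool, bToR (xi r) * M xi xj = η xj r := by
    intro xj
    have h1 : ∀ xi : Fin n → Bool, bToR (xi r) * M xi xj =
        ∏ l, ((if l = r then bToR (xi l) else 1) *
          (η xj l * bToR (xi l) + (1 - η xj l) * (1 - bToR (xi l)))) := by
      intro xi
      rw [hM, Finset.prod_mul_distrib]
      congr 1
      simp
    calc ∑ xi : Fin n → Bool, bToR (xi r) * M xi xj
        = ∑ xi : Fin n → Bool, ∏ l, ((if l = r then bToR (xi l) else 1) *
            (η xj l * bToR (xi l) + (1 - η xj l) * (1 - bToR (xi l)))) :=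
          Finset.sum_congr rfl fun xi _ => h1 xi
      _ = ∏ l, (((if l = r then bToR false else 1) *
            (η xj l * bToR false + (1 - η xj l) * (1 - bToR false))) +
            ((if l = r then bToR true else 1) *
            (η xj l * bToR true + (1 - η xj l) * (1 - bToR true)))) :=
          sum_prod_bool (fun l b => (if l = r then bToR b else 1) *
            (η xj l * bToR b + (1 - η xj l) * (1 - bToR b)))
      _ = ∏ l, (if l = r then η xj l else 1) := by
          refine Finset.prod_congr rfl fun l _ => ?_
          by_cases h : l = r <;> simp [h, bToR]
      _ = η xj r := by simp
  -- rewrite LHS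
  have swap : ∑ xi : Fin n → Bool, bToR (xi r) * ∑ xj : Fin n → Bool, M xi xj * piStar P xj
      = ∑ xj : Fin n → Bool, η xj r * piStar P xj := by
    calc ∑ xi : Fin n → Bool, bToR (xi r) * ∑ xj : Fin n → Bool, M xi xj * piStar P xj
        = ∑ xi : Fin n → Bool, ∑ xj : Fin n → Bool, (bToR (xi r) * M xi xj) * piStar P xj := by
          refine Finset.sum_congr rfl fun xi _ => ?_
          rw [Finset.mul_sum]
          exact Finset.sum_congr rfl fun xj _ => by ring
      _ = ∑ xj : Fin n → Bool, ∑ xi : Fin n → Bool, (bToR (xi r) * M xi xj) * piStar P xj :=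
          Finset.sum_comm
      _ = ∑ xj : Fin n → Bool, η xj r * piStar P xj := by
          refine Finset.sum_congr rfl fun xj _ => ?_
          rw [← Finset.sum_mul, step1 xj]
  rw [swap]
  -- η xj r = c * (1 - ∏_l h l (xj l))
  have ηform : ∀ xj : Fin n → Bool, η xj r =
      c * (1 - ∏ l, ((if l = r then 1 - bToR (xj l) else 1) *
        (if l ∈ D r then 1 - ρ l r * bToR (xj l) else 1))) := by
    intro xj
    rw [hη]
    have hprod : ∏ l, ((if l = r then 1 - bToR (xj l) else 1) *
        (if l ∈ D r then 1 - ρ l r * bToR (xj l) else 1))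
        = (1 - bToR (xj r)) * ∏ k ∈ D r, (1 - ρ k r * bToR (xj k)) := by
      rw [Finset.prod_mul_distrib]
      congr 1
      · simp
      · rw [Finset.prod_ite_mem, Finset.univ_inter]
    rw [hprod]
    ring
  have sum1 : ∑ xj : Fin n → Bool, piStar P xj = 1 := by
    unfold piStar
    rw [sum_prod_bool (fun l b => P l * bToR b + (1 - P l) * (1 - bToR b))]
    refine Finset.prod_eq_one fun l _ => ?_
    simp [bToR]
  have sum2 : ∑ xj : Fin n → Bool, (∏ l, ((if l = r then 1 - bToR (xj l) else 1) *
        (if l ∈ D r then 1 - ρ l r * bToR (xj l) else 1))) * piStar P xj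
      = (1 - P r) * ∏ k ∈ D r, (1 - ρ k r * P k) := by
    have h2 : ∀ xj : Fin n → Bool, (∏ l, ((if l = r then 1 - bToR (xj l) else 1) *
        (if l ∈ D r then 1 - ρ l r * bToR (xj l) else 1))) * piStar P xj
        = ∏ l, (((if l = r then 1 - bToR (xj l) else 1) *
          (if l ∈ D r then 1 - ρ l r * bToR (xj l) else 1)) *
          (P l * bToR (xj l) + (1 - P l) * (1 - bToR (xj l)))) := by
      intro xj
      rw [piStar, ← Finset.prod_mul_distrib]
    calc ∑ xj : Fin n → Bool, (∏ l, ((if l = r then 1 - bToR (xj l) else 1) *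
          (if l ∈ D r then 1 - ρ l r * bToR (xj l) else 1))) * piStar P xj
        = ∑ xj : Fin n → Bool, ∏ l, (((if l = r then 1 - bToR (xj l) else 1) *
          (if l ∈ D r then 1 - ρ l r * bToR (xj l) else 1)) *
          (P l * bToR (xj l) + (1 - P l) * (1 - bToR (xj l)))) :=
          Finset.sum_congr rfl fun xj _ => h2 xj
      _ = ∏ l, ((((if l = r then 1 - bToR false else 1) *
            (if l ∈ D r then 1 - ρ l r * bToR false else 1)) *
            (P l * bToR false + (1 - P l) * (1 - bToR false))) +
            (((if l = r then 1 - bToR true else 1) *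
            (if l ∈ D r then 1 - ρ l r * bToR true else 1)) *
            (P l * bToR true + (1 - P l) * (1 - bToR true)))) :=
          sum_prod_bool (fun l b => ((if l = r then 1 - bToR b else 1) *
            (if l ∈ D r then 1 - ρ l r * bToR b else 1)) *
            (P l * bToR b + (1 - P l) * (1 - bToR b)))
      _ = ∏ l, ((if l = r then 1 - P l else 1) *
            (if l ∈ D r then 1 - ρ l r * P l else 1)) := by
          refine Finset.prod_congr rfl fun l _ => ?_
          by_cases h : l = r
          · subst h
            simp [hD l, bToR]
          · by_cases h' : l ∈ D r <;> simp [h, h', bToR] <;> ring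
      _ = (1 - P r) * ∏ k ∈ D r, (1 - ρ k r * P k) := by
          rw [Finset.prod_mul_distrib]
          congr 1
          · simp
          · rw [Finset.prod_ite_mem, Finset.univ_inter]
  calc ∑ xj : Fin n → Bool, η xj r * piStar P xj
      = ∑ xj : Fin n → Bool, (c * piStar P xj -
          c * ((∏ l, ((if l = r then 1 - bToR (xj l) else 1) *
          (if l ∈ D r then 1 - ρ l r * bToR (xj l) else 1))) * piStar P xj)) := by
        refine Finset.sum_congr rfl fun xj _ => ?_
        rw [ηform xj]; ring
    _ = c * (∑ xj : Fin n → Bool, piStar P xj) -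
        c * ∑ xj : Fin n → Bool, (∏ l, ((if l = r then 1 - bToR (xj l) else 1) *
          (if l ∈ D r then 1 - ρ l r * bToR (xj l) else 1))) * piStar P xj := by
        rw [Finset.sum_sub_distrib, Finset.mul_sum, Finset.mul_sum]
    _ = c * 1 - c * ((1 - P r) * ∏ k ∈ D r, (1 - ρ k r * P k)) := by rw [sum1, sum2]
    _ = c * (P r + (1 - P r) * (1 - ∏ k ∈ D r, (1 - ρ k r * P k))) := by ring
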